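/- arXiv:1906.09163 — 3 statements merged into one kernel-verified Lean document; each statement's English description precedes it below -/
import Mathlib

section
/- Let 𝔸 be an algebra, S a finite set, and R ≤ 𝔸^(2^S) an |S|-dimensional tolerance of 𝔸. For every Q ⊆ S and all f, g ∈ 2^Q, the projections satisfy cut_Q(R)_f = cut_Q(R)_g, and each such projection is an (|S∖Q|)-dimensional tolerance of 𝔸; moreover, if R is an |S|-dimensional congruence, then each cut_Q(R)_f is an (|S∖Q|)-dimensional congruence. -/
universe u v

structure Signature : Type 1 where
  ops : Type
  arity : ops → ℕ

class Alg (σ : Signature) (A : Type u) : Type u where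
  interp : ∀ o : σ.ops, (Fin (σ.arity o) → A) → A

/-- A labeled `S`-dimensional cube with vertices labeled by elements of `A`. -/
abbrev Cube (S : Type v) (A : Type u) : Type (max u v) := (S → Bool) → A

section Defs

variable {A : Type u} {B : Type u} {S : Type v}

def Quasireflexive (R : Set (B × B)) : Prop :=
  ∀ a b : B, (a, b) ∈ R → (a, a) ∈ R ∧ (b, b) ∈ R

def SymmRel (R : Set (B × B)) : Prop := ∀ a b : B, (a, b) ∈ R → (b, a) ∈ R

def TransRel (R : Set (B × B)) : Prop :=
  ∀ a b c : B, (a, b) ∈ R → (b, c) ∈ R → (a, c) ∈ R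

def face [DecidableEq S] (i : S) (b : Bool) (γ : Cube S A) : Cube {x : S // x ≠ i} A :=
  fun f => γ fun j => if h : j = i then b else f ⟨j, h⟩

def facesRel [DecidableEq S] (i : S) (R : Set (Cube S A)) :
    Set (Cube {x : S // x ≠ i} A × Cube {x : S // x ≠ i} A) :=
  {p | ∃ γ ∈ R, p = (face i false γ, face i true γ)}

def SRefl [DecidableEq S] (R : Set (Cube S A)) : Prop := ∀ i : S, Quasireflexive (facesRel i R)
def SSymm [DecidableEq S] (R : Set (Cube S A)) : Prop := ∀ i : S, SymmRel (facesRel i R)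
def STrans [DecidableEq S] (R : Set (Cube S A)) : Prop := ∀ i : S, TransRel (facesRel i R)

def glue (i : S) (a b : Cube {x : S // x ≠ i} A) : Cube S A :=
  fun f => if f i then b (fun j => f j.val) else a (fun j => f j.val)

def reflMap [DecidableEq S] (i : S) (b : Bool) (γ : Cube S A) : Cube S A :=
  glue i (face i b γ) (face i b γ)

def symMap [DecidableEq S] (i : S) (γ : Cube S A) : Cube S A :=
  glue i (face i true γ) (face i false γ)

def cut (Q : Set S) [DecidablePred (· ∈ Q)] (γ : Cube S A) :
    Cube {x : S // x ∈ Q} (Cube {x : S // x ∉ Q} A) :=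
  fun f g => γ fun j => if h : j ∈ Q then f ⟨j, h⟩ else g ⟨j, h⟩

def cutProj (Q : Set S) [DecidablePred (· ∈ Q)] (R : Set (Cube S A))
    (f : {x : S // x ∈ Q} → Bool) : Set (Cube {x : S // x ∉ Q} A) :=
  (fun γ => cut Q γ f) '' R

variable (σ : Signature)

def CompatCube [Alg σ A] (R : Set (Cube S A)) : Prop :=
  ∀ (o : σ.ops) (γ : Fin (σ.arity o) → Cube S A), (∀ k, γ k ∈ R) →
    (fun f => Alg.interp (A := A) o fun k => γ k f) ∈ R

def CompatRel [Alg σ A] (θ : Set (A × A)) : Prop :=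
  ∀ (o : σ.ops) (x y : Fin (σ.arity o) → A), (∀ k, (x k, y k) ∈ θ) →
    (Alg.interp (A := A) o x, Alg.interp (A := A) o y) ∈ θ

def IsCongruence [Alg σ A] (θ : Set (A × A)) : Prop :=
  (∀ a : A, (a, a) ∈ θ) ∧ SymmRel θ ∧ TransRel θ ∧ CompatRel σ θ

def IsTolerance [Alg σ A] [DecidableEq S] (R : Set (Cube S A)) : Prop :=
  CompatCube σ R ∧ SRefl R ∧ SSymm R

def IsHCongruence [Alg σ A] [DecidableEq S] (R : Set (Cube S A)) : Prop :=
  IsTolerance σ R ∧ STrans R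

def subalgGen [Alg σ A] (X : Set (Cube S A)) : Set (Cube S A) :=
  ⋂₀ {R : Set (Cube S A) | CompatCube σ R ∧ X ⊆ R}

def tolGen [Alg σ A] [DecidableEq S] (X : Set (Cube S A)) : Set (Cube S A) :=
  ⋂₀ {R : Set (Cube S A) | IsTolerance σ R ∧ X ⊆ R}

def congGen [Alg σ A] [DecidableEq S] (X : Set (Cube S A)) : Set (Cube S A) :=
  ⋂₀ {R : Set (Cube S A) | IsHCongruence σ R ∧ X ⊆ R}

def cubeAt (i : S) (p : A × A) : Cube S A := fun f => bif f i then p.2 else p.1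

def cubeSet (i : S) (θ : Set (A × A)) : Set (Cube S A) := cubeAt i '' θ

def MRel [Alg σ A] [DecidableEq S] (θ : S → Set (A × A)) : Set (Cube S A) :=
  tolGen σ (⋃ i : S, cubeSet i (θ i))

def DeltaRel [Alg σ A] [DecidableEq S] (θ : S → Set (A × A)) : Set (Cube S A) :=
  congGen σ (⋃ i : S, cubeSet i (θ i))

def rectRel [DecidableEq S] (θ : S → Set (A × A)) : Set (Cube S A) :=
  {γ | ∀ (i : S) (f : {x : S // x ≠ i} → Bool), (face i false γ f, face i true γ f) ∈ θ i}

def dirClosure [DecidableEq S] (i : S) (R : Set (Cube S A)) : Set (Cube S A) :=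
  {γ | Relation.TransGen (fun a b : Cube {x : S // x ≠ i} A => (a, b) ∈ facesRel i R)
      (face i false γ) (face i true γ)}

def Centrality [DecidableEq S] [Fintype S] (δ : Set (A × A)) (i : S)
    (R : Set (Cube S A)) : Prop :=
  ¬ ∃ γ ∈ R, Nat.card {f : {x : S // x ≠ i} → Bool //
      (face i false γ f, face i true γ f) ∈ δ} = 2 ^ (Fintype.card S - 1) - 1

end Defs

def finMod (n : ℕ) [NeZero n] (j : ℕ) : Fin n :=
  ⟨j % n, Nat.mod_lt _ (Nat.pos_of_ne_zero (NeZero.ne n))⟩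

def tcSeq {A : Type u} {n : ℕ} [NeZero n] (Y : Set (Cube (Fin n) A)) :
    ℕ → Set (Cube (Fin n) A)
  | 0 => dirClosure (finMod n 0) Y
  | j + 1 => dirClosure (finMod n (j + 1)) (tcSeq Y j)

def tcClosure {A : Type u} {n : ℕ} [NeZero n] (Y : Set (Cube (Fin n) A)) :
    Set (Cube (Fin n) A) := ⋃ j : ℕ, tcSeq Y j

def lastIdx (n : ℕ) [NeZero n] : Fin n :=
  ⟨n - 1, Nat.sub_lt (Nat.pos_of_ne_zero (NeZero.ne n)) Nat.one_pos⟩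

def tcComm (σ : Signature) {A : Type u} [Alg σ A] (n : ℕ) [NeZero n]
    (θ : Fin n → Set (A × A)) : Set (A × A) :=
  ⋂₀ {δ : Set (A × A) | IsCongruence σ δ ∧ Centrality δ (lastIdx n) (MRel σ θ)}

def hComm (σ : Signature) {A : Type u} [Alg σ A] (n : ℕ) [NeZero n]
    (θ : Fin n → Set (A × A)) : Set (A × A) :=
  ⋂₀ {δ : Set (A × A) | IsCongruence σ δ ∧ Centrality δ (lastIdx n) (DeltaRel σ θ)}

inductive Term (σ : Signature) (k : ℕ) : Type
  | var : Fin k → Term σ k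
  | app : (o : σ.ops) → (Fin (σ.arity o) → Term σ k) → Term σ k

def Term.eval {σ : Signature} {k : ℕ} {A : Type u} [Alg σ A] :
    Term σ k → (Fin k → A) → A
  | .var i, v => v i
  | .app o ts, v => Alg.interp (A := A) o fun j => (ts j).eval v

def IsTaylorAlg (σ : Signature) (A : Type u) [Alg σ A] : Prop :=
  ∃ (m : ℕ) (t : Term σ (m + 1)),
    (∀ a : A, t.eval (fun _ => a) = a) ∧
    ∀ e : Fin (m + 1), ∃ u v : Fin (m + 1) → Bool, u e = false ∧ v e = true ∧
      ∀ x y : A, t.eval (fun i => bif u i then y else x)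
               = t.eval (fun i => bif v i then y else x)

open Classical in
noncomputable def comCube {A : Type u} (n : ℕ) (x y : A) : Cube (Fin n) A :=
  fun f => if ∀ i, f i = true then y else x

def iSupported {A : Type u} {S : Type v} [DecidableEq S] (i : S) (γ : Cube S A)
    (x y : A) : Prop :=
  face i false γ (fun _ => true) = x ∧ face i true γ (fun _ => true) = y ∧
  ∀ f : {z : S // z ≠ i} → Bool, f ≠ (fun _ => true) →
    face i false γ f = face i true γ f

def sqCube {A : Type u} (a b c d : A) : Cube (Fin 2) A :=
  fun f => if f 0 then (if f 1 then d else c) else (if f 1 then b else a)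

def lcs (σ : Signature) {A : Type u} [Alg σ A] (θ : Set (A × A)) : ℕ → Set (A × A)
  | 0 => θ
  | n + 1 => tcComm σ 2 ![θ, lcs σ θ n]

def diagRel (A : Type u) : Set (A × A) := {p : A × A | p.1 = p.2}


section Aux

variable {A : Type u} {S : Type v} [Fintype S] [DecidableEq S]
variable (Q : Set S) [DecidablePred (· ∈ Q)]

/-- Extension of `f : 2^Q` to all of `S`. -/
def fext (f : {x : S // x ∈ Q} → Bool) : S → Bool :=
  fun j => if h : j ∈ Q then f ⟨j, h⟩ else false

lemma face_self (i : S) (γ : Cube S A) (m : S → Bool) :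
    face i (m i) γ (fun x => m x.val) = γ m := by
  unfold face
  congr 1
  funext j
  by_cases h : j = i
  · subst h; simp
  · simp [h]

lemma collapseT (R : Set (Cube S A)) (hR : SRefl R) (f : {x : S // x ∈ Q} → Bool)
    (T : Finset S) :
    ∀ γ ∈ R, ∃ δ ∈ R, ∀ m : S → Bool,
      δ m = γ (fun j => if j ∈ T then fext Q f j else m j) := by
  induction T using Finset.induction_on with
  | empty =>
      intro γ hγ
      exact ⟨γ, hγ, fun m => by simp⟩
  | @insert i T hi ih =>
      intro γ hγ
      obtain ⟨γ₁, hγ₁, hp1⟩ := ih γ hγ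
      have hmem : (face i false γ₁, face i true γ₁) ∈ facesRel i R := ⟨γ₁, hγ₁, rfl⟩
      obtain ⟨h1, h2⟩ := hR i _ _ hmem
      set b := fext Q f i with hb
      have hex : ∃ γ₂ ∈ R, (face i b γ₁, face i b γ₁)
          = (face i false γ₂, face i true γ₂) := by
        cases hbc : b
        · rw [hbc] at *
          obtain ⟨γ₂, hγ₂, he⟩ := h1
          exact ⟨γ₂, hγ₂, he⟩
        · obtain ⟨γ₂, hγ₂, he⟩ := h2
          exact ⟨γ₂, hγ₂, he⟩
      obtain ⟨γ₂, hγ₂, he⟩ := hex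
      have e1 : face i false γ₂ = face i b γ₁ := (congrArg Prod.fst he).symm
      have e2 : face i true γ₂ = face i b γ₁ := (congrArg Prod.snd he).symm
      refine ⟨γ₂, hγ₂, fun m => ?_⟩
      have step1 : γ₂ m = face i b γ₁ (fun x => m x.val) := by
        rw [← face_self i γ₂ m]
        cases hm : m i
        · rw [e1]
        · rw [e2]
      have step2 : face i b γ₁ (fun x => m x.val)
          = γ₁ (fun j => if h : j = i then b else m j) := rfl
      rw [step1, step2, hp1]
      congr 1
      funext j
      by_cases hj : j = i
      · subst hj
        simp [hi]
        exact hb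
      · simp [Finset.mem_insert, hj]

lemma collapse (R : Set (Cube S A)) (hR : SRefl R) (f : {x : S // x ∈ Q} → Bool)
    (γ : Cube S A) (hγ : γ ∈ R) :
    ∃ δ ∈ R, ∀ m : S → Bool,
      δ m = γ (fun j => if j ∈ Q then fext Q f j else m j) := by
  obtain ⟨δ, hδ, hp⟩ := collapseT Q R hR f Q.toFinset γ hγ
  refine ⟨δ, hδ, fun m => ?_⟩
  rw [hp]
  congr 1
  funext j
  simp [Set.mem_toFinset]

lemma cut_of_collapse {γ δ : Cube S A} (f : {x : S // x ∈ Q} → Bool)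
    (hp : ∀ m : S → Bool, δ m = γ (fun j => if j ∈ Q then fext Q f j else m j)) :
    ∀ g, cut Q δ g = cut Q γ f := by
  intro g
  funext h
  show δ _ = γ _
  rw [hp]
  congr 1
  funext j
  by_cases hq : j ∈ Q
  · simp [hq, fext]
  · simp [hq]

lemma cutProj_eq (R : Set (Cube S A)) (hR : SRefl R)
    (f g : {x : S // x ∈ Q} → Bool) : cutProj Q R f = cutProj Q R g := by
  have key : ∀ f g : {x : S // x ∈ Q} → Bool, cutProj Q R f ⊆ cutProj Q R g := by
    rintro f g _ ⟨γ, hγ, rfl⟩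
    obtain ⟨δ, hδ, hp⟩ := collapse Q R hR f γ hγ
    exact ⟨δ, hδ, cut_of_collapse Q f hp g⟩
  exact (key f g).antisymm (key g f)

def Kmap (f : {x : S // x ∈ Q} → Bool) (i : {x : S // x ∉ Q})
    (h : {y : {x : S // x ∉ Q} // y ≠ i} → Bool) : {x : S // x ≠ i.val} → Bool :=
  fun x => if hQ : x.val ∈ Q then f ⟨x.val, hQ⟩
    else h ⟨⟨x.val, hQ⟩, fun e => x.prop (congrArg Subtype.val e)⟩

lemma face_cut (f : {x : S // x ∈ Q} → Bool) (i : {x : S // x ∉ Q}) (b : Bool)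
    (γ : Cube S A) (h : {y : {x : S // x ∉ Q} // y ≠ i} → Bool) :
    face i b (cut Q γ f) h = face i.val b γ (Kmap Q f i h) := by
  show γ _ = γ _
  congr 1
  funext j
  by_cases hQ : j ∈ Q
  · have hj : j ≠ i.val := fun e => i.prop (e ▸ hQ)
    simp [hQ, hj, Kmap]
  · by_cases hj : j = i.val
    · have hii : (⟨j, hQ⟩ : {x : S // x ∉ Q}) = i := Subtype.ext hj
      simp [hQ, hj, hii, i.prop]
    · have hii : (⟨j, hQ⟩ : {x : S // x ∉ Q}) ≠ i := fun e => hj (congrArg Subtype.val e)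
      simp [hQ, hj, hii, Kmap]

lemma key_face (f : {x : S // x ∈ Q} → Bool) (i : {x : S // x ∉ Q})
    {δ δ' : Cube S A} {b b' : Bool} (h : face i.val b δ = face i.val b' δ') :
    face i b (cut Q δ f) = face i b' (cut Q δ' f) := by
  funext k
  rw [face_cut, face_cut, h]

lemma delta_indep {γ δ : Cube S A} (f : {x : S // x ∈ Q} → Bool)
    (hp : ∀ m : S → Bool, δ m = γ (fun j => if j ∈ Q then fext Q f j else m j))
    (m₁ m₂ : S → Bool) (hm : ∀ j ∉ Q, m₁ j = m₂ j) : δ m₁ = δ m₂ := by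
  rw [hp, hp]
  congr 1
  funext j
  by_cases hq : j ∈ Q
  · simp [hq]
  · simp [hq, hm j hq]

lemma face_eq_of_collapsed {γ γ' δ δ' : Cube S A} (f : {x : S // x ∈ Q} → Bool)
    (hp : ∀ m : S → Bool, δ m = γ (fun j => if j ∈ Q then fext Q f j else m j))
    (hp' : ∀ m : S → Bool, δ' m = γ' (fun j => if j ∈ Q then fext Q f j else m j))
    (i : {x : S // x ∉ Q}) (b b' : Bool)
    (h : face i b (cut Q δ f) = face i b' (cut Q δ' f)) :
    face i.val b δ = face i.val b' δ' := by
  funext k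
  set resk : {y : {x : S // x ∉ Q} // y ≠ i} → Bool :=
    fun y => k ⟨y.val.val, fun e => y.prop (Subtype.ext e)⟩ with hresk
  have agree : ∀ (c : Bool), ∀ j, j ∉ Q →
      (fun j' => if hj : j' = i.val then c else k ⟨j', hj⟩) j
      = (fun j' => if hj : j' = i.val then c else Kmap Q f i resk ⟨j', hj⟩) j := by
    intro c j hq
    by_cases hj : j = i.val
    · simp [hj]
    · simp [hj, Kmap, hq, hresk]
  have e1 : face i.val b δ k = face i.val b δ (Kmap Q f i resk) :=
    delta_indep Q f hp _ _ (agree b)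
  have e2 : face i.val b' δ' k = face i.val b' δ' (Kmap Q f i resk) :=
    delta_indep Q f hp' _ _ (agree b')
  rw [e1, e2, ← face_cut, ← face_cut, h]

variable {σ : Signature} [Alg σ A]

lemma compat_cutProj {R : Set (Cube S A)} (hc : CompatCube σ R)
    (f : {x : S // x ∈ Q} → Bool) : CompatCube σ (cutProj Q R f) := by
  intro o c hc'
  simp only [cutProj, Set.mem_image] at hc'
  choose γ hγR hγe using hc'
  refine ⟨fun m => Alg.interp (A := A) o fun k => γ k m, hc o γ hγR, ?_⟩
  funext h
  show Alg.interp (A := A) o _ = Alg.interp (A := A) o _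
  congr 1
  funext k
  exact congrFun (hγe k) h

lemma srefl_cutProj {R : Set (Cube S A)} (hR : SRefl R)
    (f : {x : S // x ∈ Q} → Bool) : SRefl (cutProj Q R f) := by
  intro i a b hab
  obtain ⟨c, ⟨γ, hγ, rfl⟩, hpair⟩ := hab
  have ha : a = face i false (cut Q γ f) := congrArg Prod.fst hpair
  have hb : b = face i true (cut Q γ f) := congrArg Prod.snd hpair
  obtain ⟨h1, h2⟩ := hR i.val _ _ (⟨γ, hγ, rfl⟩ :
    (face i.val false γ, face i.val true γ) ∈ facesRel i.val R)
  constructor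
  · obtain ⟨γ₁, hγ₁, he⟩ := h1
    have e1 : face i.val false γ = face i.val false γ₁ := congrArg Prod.fst he
    have e2 : face i.val false γ = face i.val true γ₁ := congrArg Prod.snd he
    refine ⟨cut Q γ₁ f, ⟨γ₁, hγ₁, rfl⟩, ?_⟩
    rw [← key_face Q f i e1, ← key_face Q f i e2, ← ha]
  · obtain ⟨γ₁, hγ₁, he⟩ := h2
    have e1 : face i.val true γ = face i.val false γ₁ := congrArg Prod.fst he
    have e2 : face i.val true γ = face i.val true γ₁ := congrArg Prod.snd he
    refine ⟨cut Q γ₁ f, ⟨γ₁, hγ₁, rfl⟩, ?_⟩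
    rw [← key_face Q f i e1, ← key_face Q f i e2, ← hb]

lemma ssymm_cutProj {R : Set (Cube S A)} (hR : SSymm R)
    (f : {x : S // x ∈ Q} → Bool) : SSymm (cutProj Q R f) := by
  intro i a b hab
  obtain ⟨c, ⟨γ, hγ, rfl⟩, hpair⟩ := hab
  have ha : a = face i false (cut Q γ f) := congrArg Prod.fst hpair
  have hb : b = face i true (cut Q γ f) := congrArg Prod.snd hpair
  obtain ⟨γ₁, hγ₁, he⟩ := hR i.val _ _ (⟨γ, hγ, rfl⟩ :
    (face i.val false γ, face i.val true γ) ∈ facesRel i.val R)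
  have e1 : face i.val true γ = face i.val false γ₁ := congrArg Prod.fst he
  have e2 : face i.val false γ = face i.val true γ₁ := congrArg Prod.snd he
  refine ⟨cut Q γ₁ f, ⟨γ₁, hγ₁, rfl⟩, ?_⟩
  rw [← key_face Q f i e1, ← key_face Q f i e2, ← ha, ← hb]

lemma strans_cutProj {R : Set (Cube S A)} (hrefl : SRefl R) (hR : STrans R)
    (f : {x : S // x ∈ Q} → Bool) : STrans (cutProj Q R f) := by
  intro i a b c hab hbc
  obtain ⟨c₁, ⟨γ, hγ, rfl⟩, hpair₁⟩ := hab
  obtain ⟨c₂, ⟨γ', hγ', rfl⟩, hpair₂⟩ := hbc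
  have ha : a = face i false (cut Q γ f) := congrArg Prod.fst hpair₁
  have hb : b = face i true (cut Q γ f) := congrArg Prod.snd hpair₁
  have hb' : b = face i false (cut Q γ' f) := congrArg Prod.fst hpair₂
  have hc : c = face i true (cut Q γ' f) := congrArg Prod.snd hpair₂
  obtain ⟨δ, hδ, hp⟩ := collapse Q R hrefl f γ hγ
  obtain ⟨δ', hδ', hp'⟩ := collapse Q R hrefl f γ' hγ'
  have hcut : cut Q δ f = cut Q γ f := cut_of_collapse Q f hp f
  have hcut' : cut Q δ' f = cut Q γ' f := cut_of_collapse Q f hp' f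
  have hmid : face i true (cut Q δ f) = face i false (cut Q δ' f) := by
    rw [hcut, hcut', ← hb, ← hb']
  have hfull : face i.val true δ = face i.val false δ' :=
    face_eq_of_collapsed Q f hp hp' i true false hmid
  have h1 : (face i.val false δ, face i.val true δ) ∈ facesRel i.val R := ⟨δ, hδ, rfl⟩
  have h2 : (face i.val true δ, face i.val true δ') ∈ facesRel i.val R := by
    rw [hfull]; exact ⟨δ', hδ', rfl⟩
  obtain ⟨ε, hε, he⟩ := hR i.val _ _ _ h1 h2
  have e1 : face i.val false δ = face i.val false ε := congrArg Prod.fst he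
  have e2 : face i.val true δ' = face i.val true ε := congrArg Prod.snd he
  refine ⟨cut Q ε f, ⟨ε, hε, rfl⟩, ?_⟩
  have ea : a = face i false (cut Q ε f) := by
    rw [ha, ← hcut, key_face Q f i e1]
  have ec : c = face i true (cut Q ε f) := by
    rw [hc, ← hcut', key_face Q f i e2]
  rw [ea, ec]

end Aux

/-- projections of a higher-dimensional tolerance are tolerances, all
projections at different `f, g ∈ 2^Q` coincide, and the same holds with `tolerance`
replaced by `congruence`. -/
theorem stmt5 {A : Type u} {S : Type v} (σ : Signature) [Alg σ A]
    [Fintype S] [DecidableEq S] (R : Set (Cube S A))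
    (Q : Set S) [DecidablePred (· ∈ Q)] :
    (IsTolerance σ R →
      (∀ f g : {x : S // x ∈ Q} → Bool, cutProj Q R f = cutProj Q R g) ∧
      (∀ f : {x : S // x ∈ Q} → Bool, IsTolerance σ (cutProj Q R f))) ∧
    (IsHCongruence σ R →
      (∀ f g : {x : S // x ∈ Q} → Bool, cutProj Q R f = cutProj Q R g) ∧
      (∀ f : {x : S // x ∈ Q} → Bool, IsHCongruence σ (cutProj Q R f))) := by
  have main : IsTolerance σ R →
      (∀ f g : {x : S // x ∈ Q} → Bool, cutProj Q R f = cutProj Q R g) ∧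
      (∀ f : {x : S // x ∈ Q} → Bool, IsTolerance σ (cutProj Q R f)) := by
    rintro ⟨hcomp, hrefl, hsymm⟩
    exact ⟨cutProj_eq Q R hrefl, fun f =>
      ⟨compat_cutProj Q hcomp f, srefl_cutProj Q hrefl f, ssymm_cutProj Q hsymm f⟩⟩
  refine ⟨main, ?_⟩
  rintro ⟨htol, htrans⟩
  obtain ⟨heq, hT⟩ := main htol
  exact ⟨heq, fun f => ⟨hT f, strans_cutProj Q htol.2.1 htrans f⟩⟩
end

section
/- If R is an |S|-dimensional tolerance of an algebra 𝔸 and i ∈ S, then R^(∘_i), the i-directional transitive closure of R, is also an |S|-dimensional tolerance of 𝔸 containing R. -/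
universe u v

section Stmt6Aux

variable {A : Type u} {S : Type v}

lemma glue_face_eq [DecidableEq S] (i : S) (γ : Cube S A) :
    glue i (face i false γ) (face i true γ) = γ := by
  funext f
  simp only [glue, face]
  cases h : f i <;>
  · simp only [h, Bool.false_eq_true, if_false, if_true]
    congr 1
    funext k
    by_cases hk : k = i <;> simp [hk, h]

lemma face_glue [DecidableEq S] (i : S) (b : Bool) (a c : Cube {x : S // x ≠ i} A) :
    face i b (glue i a c) = bif b then c else a := by
  funext f
  cases b <;>
  · simp only [face, glue, cond_false, cond_true, eq_self_iff_true, dite_true,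
      Bool.false_eq_true, if_false, if_true]
    congr 1
    funext k
    rw [dif_neg k.2]

lemma facesRel_compat (σ : Signature) [Alg σ A] [DecidableEq S] {R : Set (Cube S A)}
    (hc : CompatCube σ R) (i : S) (o : σ.ops)
    (x y : Fin (σ.arity o) → Cube {s : S // s ≠ i} A)
    (h : ∀ k, (x k, y k) ∈ facesRel i R) :
    ((fun f => Alg.interp (A := A) o fun k => x k f),
     (fun f => Alg.interp (A := A) o fun k => y k f)) ∈ facesRel i R := by
  choose ρ hρ heq using h
  have h1 : ∀ k, x k = face i false (ρ k) := fun k => congrArg Prod.fst (heq k)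
  have h2 : ∀ k, y k = face i true (ρ k) := fun k => congrArg Prod.snd (heq k)
  refine ⟨fun f => Alg.interp (A := A) o fun k => ρ k f, hc o ρ hρ, ?_⟩
  refine Prod.ext ?_ ?_
  · funext g
    show Alg.interp (A := A) o (fun k => x k g) = _
    congr 1
    funext k
    rw [h1 k]
    rfl
  · funext g
    show Alg.interp (A := A) o (fun k => y k g) = _
    congr 1
    funext k
    rw [h2 k]
    rfl

def iterRel {B : Type w} (r : B → B → Prop) : ℕ → B → B → Prop
  | 0 => r
  | n + 1 => fun x y => ∃ z, iterRel r n x z ∧ r z y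

lemma transGen_iff_iter {B : Type w} (r : B → B → Prop) (x y : B) :
    Relation.TransGen r x y ↔ ∃ n, iterRel r n x y := by
  constructor
  · intro h
    induction h with
    | single h => exact ⟨0, h⟩
    | tail _ h ih => obtain ⟨n, hn⟩ := ih; exact ⟨n + 1, _, hn, h⟩
  · rintro ⟨n, hn⟩
    induction n generalizing y with
    | zero => exact .single hn
    | succ n ih => obtain ⟨z, h1, h2⟩ := hn; exact (ih z h1).tail h2

lemma iter_last {B : Type w} {r : B → B → Prop} (hq : ∀ a b : B, r a b → r b b) :
    ∀ n (x y : B), iterRel r n x y → r y y := by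
  intro n
  induction n with
  | zero => exact hq
  | succ n ih => rintro x y ⟨z, _, h2⟩; exact hq z y h2

lemma iter_pad {B : Type w} {r : B → B → Prop} (hq : ∀ a b : B, r a b → r b b)
    {n : ℕ} {x y : B} (h : iterRel r n x y) : ∀ m, n ≤ m → iterRel r m x y := by
  intro m hm
  induction hm with
  | refl => exact h
  | step _ ih => exact ⟨y, ih, iter_last hq _ x y ih⟩

lemma iter_compat {B : Type w} {r : B → B → Prop} {m : ℕ} {op : (Fin m → B) → B}
    (hcomp : ∀ x y : Fin m → B, (∀ k, r (x k) (y k)) → r (op x) (op y)) :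
    ∀ n (x y : Fin m → B), (∀ k, iterRel r n (x k) (y k)) → iterRel r n (op x) (op y) := by
  intro n
  induction n with
  | zero => exact hcomp
  | succ n ih =>
    intro x y h
    choose z h1 h2 using h
    exact ⟨op z, ih x z h1, hcomp z y h2⟩

def twist [DecidableEq S] (j : S) (u v : Bool) (γ : Cube S A) : Cube S A :=
  glue j (face j u γ) (face j v γ)

lemma face_twist_false [DecidableEq S] (j : S) (u v : Bool) (γ : Cube S A) :
    face j false (twist j u v γ) = face j u γ := by
  rw [twist, face_glue]; rfl

lemma face_twist_true [DecidableEq S] (j : S) (u v : Bool) (γ : Cube S A) :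
    face j true (twist j u v γ) = face j v γ := by
  rw [twist, face_glue]; rfl

lemma twist_mem [DecidableEq S] {R : Set (Cube S A)} (hs : SRefl R) (hsym : SSymm R)
    {γ : Cube S A} (hγ : γ ∈ R) (j : S) (u v : Bool)
    (huv : u = v ∨ (u = true ∧ v = false)) : twist j u v γ ∈ R := by
  have hpair : (face j false γ, face j true γ) ∈ facesRel j R := ⟨γ, hγ, rfl⟩
  have key : (face j u γ, face j v γ) ∈ facesRel j R := by
    obtain rfl | ⟨rfl, rfl⟩ := huv
    · cases u
      · exact (hs j _ _ hpair).1
      · exact (hs j _ _ hpair).2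
    · exact hsym j _ _ hpair
  obtain ⟨ρ, hρ, heq⟩ := key
  have h1 : face j u γ = face j false ρ := congrArg Prod.fst heq
  have h2 : face j v γ = face j true ρ := congrArg Prod.snd heq
  have : twist j u v γ = ρ := by rw [twist, h1, h2, glue_face_eq]
  rwa [this]

lemma face_comm_twist [DecidableEq S] {i j : S} (hij : j ≠ i) (u v c : Bool) (γ : Cube S A) :
    face i c (twist j u v γ) =
      twist (⟨j, hij⟩ : {x : S // x ≠ i}) u v (face i c γ) := by
  funext g
  have hFj : (if h : j = i then c else g ⟨j, h⟩) = g ⟨j, hij⟩ := dif_neg hij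
  simp only [twist, glue, face, hFj]
  cases hgj : g ⟨j, hij⟩ <;>
  · simp only [Bool.false_eq_true, if_false, if_true]
    congr 1
    funext k
    by_cases hki : k = i
    · subst hki
      rw [dif_pos rfl, dif_neg (Ne.symm hij), dif_pos rfl]
    · rw [dif_neg hki]
      by_cases hkj : k = j
      · subst hkj
        rw [dif_pos rfl, dif_pos rfl]
      · rw [dif_neg hkj, dif_neg (fun h => hkj (congrArg Subtype.val h)), dif_neg hki]

lemma step_twist [DecidableEq S] {R : Set (Cube S A)} (hs : SRefl R) (hsym : SSymm R)
    {i j : S} (hij : j ≠ i) (u v : Bool) (huv : u = v ∨ (u = true ∧ v = false))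
    {a b : Cube {x : S // x ≠ i} A} (h : (a, b) ∈ facesRel i R) :
    (twist (⟨j, hij⟩ : {x : S // x ≠ i}) u v a,
     twist (⟨j, hij⟩ : {x : S // x ≠ i}) u v b) ∈ facesRel i R := by
  obtain ⟨ρ, hρ, heq⟩ := h
  have h1 : a = face i false ρ := congrArg Prod.fst heq
  have h2 : b = face i true ρ := congrArg Prod.snd heq
  subst h1 h2
  exact ⟨twist j u v ρ, twist_mem hs hsym hρ j u v huv,
    by rw [face_comm_twist hij, face_comm_twist hij]⟩

lemma facesRel_dirClosure [DecidableEq S] (i : S) (R : Set (Cube S A))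
    (p q : Cube {x : S // x ≠ i} A) :
    (p, q) ∈ facesRel i (dirClosure i R) ↔
      Relation.TransGen (fun a b => (a, b) ∈ facesRel i R) p q := by
  constructor
  · rintro ⟨γ, hγ, heq⟩
    have h1 : p = face i false γ := congrArg Prod.fst heq
    have h2 : q = face i true γ := congrArg Prod.snd heq
    rw [h1, h2]; exact hγ
  · intro h
    refine ⟨glue i p q, ?_, ?_⟩
    · show Relation.TransGen _ (face i false (glue i p q)) (face i true (glue i p q))
      rw [face_glue, face_glue]; exact h
    · rw [face_glue, face_glue]
      rfl

lemma transGen_symm {B : Type w} {r : B → B → Prop} (hs : ∀ a b, r a b → r b a)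
    {a b : B} (h : Relation.TransGen r a b) : Relation.TransGen r b a := by
  induction h with
  | single h => exact .single (hs _ _ h)
  | tail _ h ih => exact (Relation.TransGen.single (hs _ _ h)).trans ih

lemma transGen_first {B : Type w} {r : B → B → Prop} {a b : B}
    (h : Relation.TransGen r a b) : ∃ c, r a c := by
  induction h with
  | single h => exact ⟨_, h⟩
  | tail _ _ ih => exact ih

lemma transGen_last {B : Type w} {r : B → B → Prop} {a b : B}
    (h : Relation.TransGen r a b) : ∃ c, r c b := by
  cases h with
  | single h => exact ⟨_, h⟩
  | tail _ h => exact ⟨_, h⟩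

end Stmt6Aux

/-- the `i`-directional transitive closure of an |S|-dimensional tolerance
is again an |S|-dimensional tolerance containing it. -/
theorem stmt6 {A : Type u} {S : Type v} (σ : Signature) [Alg σ A]
    [Fintype S] [DecidableEq S] (R : Set (Cube S A)) (hR : IsTolerance σ R) (i : S) :
    IsTolerance σ (dirClosure i R) ∧ R ⊆ dirClosure i R := by
  obtain ⟨hc, hs, hsym⟩ := hR
  set r : Cube {x : S // x ≠ i} A → Cube {x : S // x ≠ i} A → Prop :=
    fun a b => (a, b) ∈ facesRel i R with hr
  have hq : ∀ a b, r a b → r a a ∧ r b b := fun a b h => (hs i) a b h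
  have hq' : ∀ a b, r a b → r b b := fun a b h => (hq a b h).2
  have hsub : R ⊆ dirClosure i R := fun γ hγ => Relation.TransGen.single ⟨γ, hγ, rfl⟩
  refine ⟨⟨?_, ?_, ?_⟩, hsub⟩
  · -- CompatCube
    intro o γ hγ
    show Relation.TransGen r _ _
    have hγ' : ∀ k, Relation.TransGen r (face i false (γ k)) (face i true (γ k)) := hγ
    have hn : ∀ k, ∃ n, iterRel r n (face i false (γ k)) (face i true (γ k)) :=
      fun k => (transGen_iff_iter r _ _).1 (hγ' k)
    choose n hn using hn
    set N := Finset.univ.sup n with hN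
    have hcomp : ∀ x y : Fin (σ.arity o) → Cube {s : S // s ≠ i} A,
        (∀ k, r (x k) (y k)) →
        r (fun f => Alg.interp (A := A) o fun k => x k f)
          (fun f => Alg.interp (A := A) o fun k => y k f) :=
      fun x y h => facesRel_compat σ hc i o x y h
    have hpad : ∀ k, iterRel r N (face i false (γ k)) (face i true (γ k)) :=
      fun k => iter_pad hq' (hn k) N (Finset.le_sup (Finset.mem_univ k))
    have := iter_compat (op := fun (v : Fin (σ.arity o) → Cube {s : S // s ≠ i} A) =>
      (fun f => Alg.interp (A := A) o fun k => v k f)) hcomp N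
      (fun k => face i false (γ k)) (fun k => face i true (γ k)) hpad
    exact (transGen_iff_iter r _ _).2 ⟨N, this⟩
  · -- SRefl
    intro j p q hpq
    by_cases hji : j = i
    · subst hji
      rw [facesRel_dirClosure] at hpq
      constructor
      · rw [facesRel_dirClosure]
        obtain ⟨c, hc'⟩ := transGen_first hpq
        exact .single (hq p c hc').1
      · rw [facesRel_dirClosure]
        obtain ⟨c, hc'⟩ := transGen_last hpq
        exact .single (hq c q hc').2
    · obtain ⟨γ, hγ, heq⟩ := hpq
      have h1 : p = face j false γ := congrArg Prod.fst heq
      have h2 : q = face j true γ := congrArg Prod.snd heq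
      have hmem : ∀ u v : Bool, (u = v ∨ (u = true ∧ v = false)) →
          twist j u v γ ∈ dirClosure i R := by
        intro u v huv
        show Relation.TransGen r (face i false (twist j u v γ)) (face i true (twist j u v γ))
        rw [face_comm_twist hji, face_comm_twist hji]
        exact Relation.TransGen.lift _ (fun a b h => step_twist hs hsym hji u v huv h) _ _ hγ
      constructor
      · exact ⟨twist j false false γ, hmem false false (Or.inl rfl),
          by rw [face_twist_false, face_twist_true, h1]⟩
      · exact ⟨twist j true true γ, hmem true true (Or.inl rfl),
          by rw [face_twist_false, face_twist_true, h2]⟩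
  · -- SSymm
    intro j p q hpq
    by_cases hji : j = i
    · subst hji
      rw [facesRel_dirClosure] at hpq ⊢
      exact transGen_symm (fun a b h => hsym _ a b h) hpq
    · obtain ⟨γ, hγ, heq⟩ := hpq
      have h1 : p = face j false γ := congrArg Prod.fst heq
      have h2 : q = face j true γ := congrArg Prod.snd heq
      have hmem : twist j true false γ ∈ dirClosure i R := by
        show Relation.TransGen r (face i false (twist j true false γ))
          (face i true (twist j true false γ))
        rw [face_comm_twist hji, face_comm_twist hji]
        exact Relation.TransGen.lift _
          (fun a b h => step_twist hs hsym hji true false (Or.inr ⟨rfl, rfl⟩) h) _ _ hγ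
      exact ⟨twist j true false γ, hmem,
        by rw [face_twist_false, face_twist_true, h1, h2]⟩
end

section
/- Let 𝔸 be an algebra, n ≥ 2, and θ_0, …, θ_{n−1} congruences. Then the hypercommutator satisfies: (1) [θ_0,…,θ_{n−1}]_H ≤ ⋀_{i∈n} θ_i; (2) monotonicity: if θ_i ≤ γ_i for all i then [θ_0,…,θ_{n−1}]_H ≤ [γ_0,…,γ_{n−1}]_H; (3) [θ_0,…,θ_{n−1}]_H ≤ [θ_1,…,θ_{n−1}]_H; and (4) the term condition commutator satisfies [θ_0,…,θ_{n−1}]_TC ≤ [θ_0,…,θ_{n−1}]_H. -/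
universe u v

section Aux
variable {A : Type u} {S : Type v} [DecidableEq S]

theorem face_glue_false (i : S) (a b : Cube {x : S // x ≠ i} A) :
    face i false (glue i a b) = a := by
  funext f
  simp only [face, glue]
  rw [if_neg]
  · congr 1; funext j; rw [dif_neg j.2]
  · simp

theorem face_glue_true (i : S) (a b : Cube {x : S // x ≠ i} A) :
    face i true (glue i a b) = b := by
  funext f
  simp only [face, glue]
  rw [if_pos]
  · congr 1; funext j; rw [dif_neg j.2]
  · simp

theorem glue_face (i : S) (γ : Cube S A) :
    glue i (face i false γ) (face i true γ) = γ := by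
  funext f
  simp only [face, glue]
  by_cases h : f i
  · rw [if_pos h]; congr 1; funext j
    by_cases hj : j = i
    · subst hj; rw [dif_pos rfl]; exact h.symm
    · rw [dif_neg hj]
  · rw [if_neg h]; congr 1; funext j
    by_cases hj : j = i
    · subst hj; rw [dif_pos rfl]; simp at h; exact h.symm
    · rw [dif_neg hj]

theorem mem_facesRel {i : S} {R : Set (Cube S A)} {a b : Cube {x : S // x ≠ i} A} :
    (a, b) ∈ facesRel i R ↔ glue i a b ∈ R := by
  constructor
  · rintro ⟨γ, hγ, hp⟩
    obtain ⟨ha, hb⟩ : a = face i false γ ∧ b = face i true γ := by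
      constructor <;> [exact congrArg Prod.fst hp; exact congrArg Prod.snd hp]
    rw [ha, hb, glue_face]; exact hγ
  · intro h
    exact ⟨glue i a b, h, by rw [face_glue_false, face_glue_true]⟩

theorem refl_closed {R : Set (Cube S A)} (h : SRefl R) {γ : Cube S A} (hγ : γ ∈ R)
    (i : S) (b : Bool) : glue i (face i b γ) (face i b γ) ∈ R := by
  have hm : (face i false γ, face i true γ) ∈ facesRel i R := ⟨γ, hγ, rfl⟩
  have := h i _ _ hm
  cases b
  · exact mem_facesRel.mp this.1
  · exact mem_facesRel.mp this.2

theorem symm_closed {R : Set (Cube S A)} (h : SSymm R) {γ : Cube S A} (hγ : γ ∈ R)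
    (i : S) : glue i (face i true γ) (face i false γ) ∈ R := by
  have hm : (face i false γ, face i true γ) ∈ facesRel i R := ⟨γ, hγ, rfl⟩
  exact mem_facesRel.mp (h i _ _ hm)

theorem trans_closed {R : Set (Cube S A)} (h : STrans R) {γ₁ γ₂ : Cube S A}
    (h1 : γ₁ ∈ R) (h2 : γ₂ ∈ R) {i : S} (hm : face i true γ₁ = face i false γ₂) :
    glue i (face i false γ₁) (face i true γ₂) ∈ R := by
  have hm1 : (face i false γ₁, face i true γ₁) ∈ facesRel i R := ⟨γ₁, h1, rfl⟩
  have hm2 : (face i false γ₂, face i true γ₂) ∈ facesRel i R := ⟨γ₂, h2, rfl⟩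
  rw [hm] at hm1
  exact mem_facesRel.mp (h i _ _ _ hm1 hm2)

end Aux
section Aux2
variable {A : Type u} {S : Type v} [DecidableEq S] (σ : Signature) [Alg σ A]

theorem sInter_isTol {𝒮 : Set (Set (Cube S A))}
    (h : ∀ R ∈ 𝒮, IsTolerance σ R) : IsTolerance σ (⋂₀ 𝒮) := by
  refine ⟨?_, ?_, ?_⟩
  · intro o γ hγ R hR
    exact (h R hR).1 o γ (fun k => hγ k R hR)
  · rintro i a b ⟨γ, hγ, hp⟩
    obtain ⟨ha, hb⟩ : a = face i false γ ∧ b = face i true γ :=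
      ⟨congrArg Prod.fst hp, congrArg Prod.snd hp⟩
    subst ha; subst hb
    constructor
    · exact mem_facesRel.mpr fun R hR => refl_closed (h R hR).2.1 (hγ R hR) i false
    · exact mem_facesRel.mpr fun R hR => refl_closed (h R hR).2.1 (hγ R hR) i true
  · rintro i a b ⟨γ, hγ, hp⟩
    obtain ⟨ha, hb⟩ : a = face i false γ ∧ b = face i true γ :=
      ⟨congrArg Prod.fst hp, congrArg Prod.snd hp⟩
    subst ha; subst hb
    exact mem_facesRel.mpr fun R hR => symm_closed (h R hR).2.2 (hγ R hR) i

theorem sInter_isH {𝒮 : Set (Set (Cube S A))}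
    (h : ∀ R ∈ 𝒮, IsHCongruence σ R) : IsHCongruence σ (⋂₀ 𝒮) := by
  refine ⟨sInter_isTol σ (fun R hR => (h R hR).1), ?_⟩
  rintro i a b c ⟨γ₁, hγ₁, hp₁⟩ ⟨γ₂, hγ₂, hp₂⟩
  obtain ⟨ha, hb⟩ : a = face i false γ₁ ∧ b = face i true γ₁ :=
    ⟨congrArg Prod.fst hp₁, congrArg Prod.snd hp₁⟩
  obtain ⟨hb', hc⟩ : b = face i false γ₂ ∧ c = face i true γ₂ :=
    ⟨congrArg Prod.fst hp₂, congrArg Prod.snd hp₂⟩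
  subst ha; subst hc; subst hb
  exact mem_facesRel.mpr fun R hR =>
    trans_closed (h R hR).2 (hγ₁ R hR) (hγ₂ R hR) hb'

theorem tolGen_isTol (X : Set (Cube S A)) : IsTolerance σ (tolGen σ X) :=
  sInter_isTol σ (fun _ hR => hR.1)

theorem congGen_isH (X : Set (Cube S A)) : IsHCongruence σ (congGen σ X) :=
  sInter_isH σ (fun _ hR => hR.1)

theorem subset_tolGen (X : Set (Cube S A)) : X ⊆ tolGen σ X :=
  fun γ hγ R hR => hR.2 hγ

theorem subset_congGen (X : Set (Cube S A)) : X ⊆ congGen σ X :=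
  fun γ hγ R hR => hR.2 hγ

theorem tolGen_min {X R : Set (Cube S A)} (hR : IsTolerance σ R) (hX : X ⊆ R) :
    tolGen σ X ⊆ R := Set.sInter_subset_of_mem ⟨hR, hX⟩

theorem congGen_min {X R : Set (Cube S A)} (hR : IsHCongruence σ R) (hX : X ⊆ R) :
    congGen σ X ⊆ R := Set.sInter_subset_of_mem ⟨hR, hX⟩

theorem tolGen_subset_congGen (X : Set (Cube S A)) : tolGen σ X ⊆ congGen σ X :=
  tolGen_min σ (congGen_isH σ X).1 (subset_congGen σ X)

theorem tolGen_mono {X Y : Set (Cube S A)} (h : X ⊆ Y) : tolGen σ X ⊆ tolGen σ Y :=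
  tolGen_min σ (tolGen_isTol σ Y) (h.trans (subset_tolGen σ Y))

theorem congGen_mono {X Y : Set (Cube S A)} (h : X ⊆ Y) : congGen σ X ⊆ congGen σ Y :=
  congGen_min σ (congGen_isH σ Y) (h.trans (subset_congGen σ Y))

theorem MRel_subset_DeltaRel (θ : S → Set (A × A)) : MRel σ θ ⊆ DeltaRel σ θ :=
  tolGen_subset_congGen σ _

end Aux2
section Aux3
variable {A : Type u} {S : Type v} [DecidableEq S] (σ : Signature) [Alg σ A]

/-- Cubes all of whose `i`-direction cross-section lines lie in `δ`. -/
def Lset (i : S) (δ : Set (A × A)) : Set (Cube S A) :=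
  {γ | ∀ f, (face i false γ f, face i true γ f) ∈ δ}

theorem face_glue_ne {i k : S} (hk : k ≠ i) (c u w : Bool) (γ₁ γ₂ : Cube S A)
    (f : {x : S // x ≠ i} → Bool) :
    face i c (glue k (face k u γ₁) (face k w γ₂)) f =
      if f ⟨k, hk⟩ = true then
        face i c γ₂ (fun j => if j.val = k then w else f j)
      else
        face i c γ₁ (fun j => if j.val = k then u else f j) := by
  simp only [face, glue]
  have hik : (if h : k = i then c else f ⟨k, h⟩) = f ⟨k, hk⟩ := dif_neg hk
  simp only [hik]
  by_cases hf : f ⟨k, hk⟩ = true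
  · rw [if_pos hf, if_pos hf]
    congr 1; funext j
    by_cases hjk : (j : S) = k
    · rw [dif_pos hjk]
      have hji : (j : S) ≠ i := hjk ▸ hk
      rw [dif_neg hji, if_pos hjk]
    · rw [dif_neg hjk]
      by_cases hji : (j : S) = i
      · rw [dif_pos hji, dif_pos hji]
      · rw [dif_neg hji, dif_neg hji, if_neg hjk]
  · rw [if_neg hf, if_neg hf]
    congr 1; funext j
    by_cases hjk : (j : S) = k
    · rw [dif_pos hjk]
      have hji : (j : S) ≠ i := hjk ▸ hk
      rw [dif_neg hji, if_pos hjk]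
    · rw [dif_neg hjk]
      by_cases hji : (j : S) = i
      · rw [dif_pos hji, dif_pos hji]
      · rw [dif_neg hji, dif_neg hji, if_neg hjk]

theorem Lset_isH {i : S} {δ : Set (A × A)} (hδ : IsCongruence σ δ) :
    IsHCongruence σ (Lset (A := A) i δ) := by
  obtain ⟨hrefl, hsymm, htrans, hcomp⟩ := hδ
  have key : ∀ (k : S) (u w : Bool) (γ₁ γ₂ : Cube S A), γ₁ ∈ Lset i δ → γ₂ ∈ Lset i δ →
      (k = i → ((u = false ∧ w = true ∧ face i true γ₁ = face i false γ₂) ∨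
        (γ₁ = γ₂ ∧ ((u = w) ∨ (u = true ∧ w = false))))) →
      glue k (face k u γ₁) (face k w γ₂) ∈ Lset i δ := by
    intro k u w γ₁ γ₂ h1 h2 hcase f
    by_cases hk : k = i
    · subst hk
      rcases hcase rfl with ⟨hu, hw, hm⟩ | ⟨hg, hc⟩
      · subst hu; subst hw
        rw [face_glue_false, face_glue_true]
        exact htrans _ _ _ (h1 f) (hm ▸ h2 f)
      · subst hg
        rcases hc with h | ⟨hu, hw⟩
        · subst h
          cases u
          · rw [face_glue_false, face_glue_true]; exact (hrefl _)
          · rw [face_glue_false, face_glue_true]; exact (hrefl _)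
        · subst hu; subst hw
          rw [face_glue_false, face_glue_true]
          exact hsymm _ _ (h1 f)
    · rw [face_glue_ne (Ne.symm (Ne.symm hk)) false u w γ₁ γ₂ f,
        face_glue_ne (Ne.symm (Ne.symm hk)) true u w γ₁ γ₂ f]
      by_cases hf : f ⟨k, hk⟩ = true
      · rw [if_pos hf, if_pos hf]; exact h2 _
      · rw [if_neg hf, if_neg hf]; exact h1 _
  refine ⟨⟨?_, ?_, ?_⟩, ?_⟩
  · intro o γ hγ f
    exact hcomp o _ _ fun kk => hγ kk f
  · rintro k a b ⟨γ, hγ, hp⟩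
    obtain ⟨ha, hb⟩ : a = face k false γ ∧ b = face k true γ :=
      ⟨congrArg Prod.fst hp, congrArg Prod.snd hp⟩
    subst ha; subst hb
    exact ⟨mem_facesRel.mpr (key k false false γ γ hγ hγ (fun _ => Or.inr ⟨rfl, Or.inl rfl⟩)),
      mem_facesRel.mpr (key k true true γ γ hγ hγ (fun _ => Or.inr ⟨rfl, Or.inl rfl⟩))⟩
  · rintro k a b ⟨γ, hγ, hp⟩
    obtain ⟨ha, hb⟩ : a = face k false γ ∧ b = face k true γ :=
      ⟨congrArg Prod.fst hp, congrArg Prod.snd hp⟩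
    subst ha; subst hb
    exact mem_facesRel.mpr (key k true false γ γ hγ hγ (fun _ => Or.inr ⟨rfl, Or.inr ⟨rfl, rfl⟩⟩))
  · rintro k a b c ⟨γ₁, h1, hp₁⟩ ⟨γ₂, h2, hp₂⟩
    obtain ⟨ha, hb⟩ : a = face k false γ₁ ∧ b = face k true γ₁ :=
      ⟨congrArg Prod.fst hp₁, congrArg Prod.snd hp₁⟩
    obtain ⟨hb', hc⟩ : b = face k false γ₂ ∧ c = face k true γ₂ :=
      ⟨congrArg Prod.fst hp₂, congrArg Prod.snd hp₂⟩
    subst ha; subst hc; subst hb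
    exact mem_facesRel.mpr (key k false true γ₁ γ₂ h1 h2 (fun h => Or.inl ⟨rfl, rfl, h ▸ hb'⟩))

theorem cubeAt_mem_Lset {i j : S} {δ : Set (A × A)} (hrefl : ∀ a : A, (a, a) ∈ δ)
    {θj : Set (A × A)} (hsub : j = i → θj ⊆ δ) {p : A × A} (hp : p ∈ θj) :
    cubeAt j p ∈ Lset (A := A) i δ := by
  intro f
  simp only [face, cubeAt]
  by_cases hji : j = i
  · subst hji
    rw [dif_pos rfl, dif_pos rfl]
    exact hsub rfl hp
  · rw [dif_neg hji, dif_neg hji]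
    exact hrefl _

theorem DeltaRel_subset_Lset {θ : S → Set (A × A)} (hθ : ∀ i, IsCongruence σ (θ i)) (i : S) :
    DeltaRel σ θ ⊆ Lset (A := A) i (θ i) := by
  refine congGen_min σ (Lset_isH σ (hθ i)) ?_
  rintro γ hγ
  simp only [Set.mem_iUnion, cubeSet, Set.mem_image] at hγ
  obtain ⟨j, p, hp, rfl⟩ := hγ
  exact cubeAt_mem_Lset (hθ i).1 (fun h => h ▸ subset_rfl) hp

end Aux3
section Aux4

theorem card_subtype_of_all {α : Type*} [Fintype α] (P : α → Prop) (h : ∀ f, P f) :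
    Nat.card {f // P f} = Fintype.card α := by
  rw [Nat.card_congr (Equiv.subtypeUnivEquiv h), Nat.card_eq_fintype_card]

theorem card_subtype_le_of_two_not {α : Type*} [Fintype α] (P : α → Prop) {f₀ f₁ : α}
    (hne : f₀ ≠ f₁) (h0 : ¬P f₀) (h1 : ¬P f₁) :
    Nat.card {f // P f} ≤ Fintype.card α - 2 := by
  classical
  rw [Nat.card_eq_fintype_card, Fintype.card_subtype]
  have hsub : Finset.univ.filter P ⊆ (Finset.univ.erase f₀).erase f₁ := by
    intro f hf
    simp only [Finset.mem_filter] at hf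
    refine Finset.mem_erase.mpr ⟨?_, Finset.mem_erase.mpr ⟨?_, Finset.mem_univ f⟩⟩
    · rintro rfl; exact h1 hf.2
    · rintro rfl; exact h0 hf.2
  have hcard := Finset.card_le_card hsub
  rw [Finset.card_erase_of_mem (Finset.mem_erase.mpr ⟨hne.symm, Finset.mem_univ f₁⟩),
    Finset.card_erase_of_mem (Finset.mem_univ f₀), Finset.card_univ] at hcard
  have he : Finset.filter (fun x => P x) Finset.univ = Finset.filter P Finset.univ := rfl
  rw [he]
  omega

theorem exists_not_of_card_lt {α : Type*} [Fintype α] (P : α → Prop)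
    (h : Nat.card {f // P f} < Fintype.card α) : ∃ f, ¬P f := by
  by_contra hc
  push_neg at hc
  rw [card_subtype_of_all P hc] at h
  exact lt_irrefl _ h

variable {A : Type u} (σ : Signature) [Alg σ A]

theorem card_ne_index {S : Type v} [DecidableEq S] [Fintype S] (k : S) :
    Fintype.card ({x : S // x ≠ k} → Bool) = 2 ^ (Fintype.card S - 1) := by
  classical
  rw [Fintype.card_fun, Fintype.card_bool]
  congr 1
  have : Fintype.card {x : S // x ≠ k} = Fintype.card S - Fintype.card {x : S // x = k} :=
    Fintype.card_subtype_compl _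
  rw [this, Fintype.card_subtype_eq]

theorem centrality_of_eq {S : Type v} [DecidableEq S] [Fintype S] {δ : Set (A × A)}
    {k : S} {R : Set (Cube S A)} (hR : R ⊆ Lset (A := A) k δ) :
    Centrality δ k R := by
  rintro ⟨γ, hγ, hc⟩
  rw [card_subtype_of_all _ (hR hγ), card_ne_index] at hc
  have : 0 < 2 ^ (Fintype.card S - 1) := by positivity
  omega

theorem centrality_of_ne {S : Type v} [DecidableEq S] [Fintype S] {δ : Set (A × A)}
    (hδ : IsCongruence σ δ) {i k : S} (hik : i ≠ k) (hS : 2 ≤ Fintype.card S)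
    {R : Set (Cube S A)} (hR : R ⊆ Lset (A := A) i δ) :
    Centrality δ k R := by
  obtain ⟨hrefl, hsymm, htrans, _⟩ := hδ
  rintro ⟨γ, hγ, hc⟩
  set P : ({x : S // x ≠ k} → Bool) → Prop :=
    fun f => (face k false γ f, face k true γ f) ∈ δ with hP
  have hline : ∀ g, (face i false γ g, face i true γ g) ∈ δ := hR hγ
  set flip : ({x : S // x ≠ k} → Bool) → ({x : S // x ≠ k} → Bool) :=
    fun f j => if (j : S) = i then !(f j) else f j with hflip
  -- the two vertices of a `k`-line and their `i`-flips are `δ`-related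
  have claim1 : ∀ (f : {x : S // x ≠ k} → Bool) (c : Bool),
      (face k c γ f, face k c γ (flip f)) ∈ δ := by
    intro f c
    set g : {x : S // x ≠ i} → Bool :=
      fun j => if h : (j : S) = k then c else f ⟨j, h⟩ with hg
    set b₀ : Bool := f ⟨i, hik⟩ with hb₀
    have key : ∀ b : Bool, face i b γ g =
        γ (fun j => if h : j = k then c else
            (if (j : S) = i then b else f ⟨j, h⟩)) := by
      intro b
      simp only [face, hg]
      congr 1; funext j
      by_cases hji : j = i
      · subst hji
        rw [dif_pos rfl, dif_neg hik, if_pos rfl]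
      · rw [dif_neg hji]
        by_cases hjk : j = k
        · rw [dif_pos hjk, dif_pos hjk]
        · rw [dif_neg hjk, dif_neg hjk, if_neg hji]
    have e1 : face k c γ f = face i b₀ γ g := by
      rw [key b₀]
      simp only [face]
      congr 1; funext j
      by_cases hjk : j = k
      · rw [dif_pos hjk, dif_pos hjk]
      · rw [dif_neg hjk, dif_neg hjk]
        by_cases hji : j = i
        · rw [if_pos hji]
          subst hji; rfl
        · rw [if_neg hji]
    have e2 : face k c γ (flip f) = face i (!b₀) γ g := by
      rw [key (!b₀)]
      simp only [face, hflip]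
      congr 1; funext j
      by_cases hjk : j = k
      · rw [dif_pos hjk, dif_pos hjk]
      · rw [dif_neg hjk, dif_neg hjk]
        by_cases hji : (j : S) = i
        · rw [if_pos hji, if_pos hji]
          congr 2
          subst hji; rfl
        · rw [if_neg hji, if_neg hji]
    rw [e1, e2]
    cases hb : b₀
    · simpa using hline g
    · simpa using hsymm _ _ (hline g)
  have claim2 : ∀ f, P f → P (flip f) := by
    intro f hf
    exact htrans _ _ _ (htrans _ _ _ (hsymm _ _ (claim1 f false)) hf) (claim1 f true)
  have claim3 : ∀ f, flip f ≠ f := by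
    intro f hf
    have := congrFun hf ⟨i, hik⟩
    simp only [hflip, if_pos rfl] at this
    exact (Bool.not_ne_self _) this
  -- counting
  have htot : Fintype.card ({x : S // x ≠ k} → Bool) = 2 ^ (Fintype.card S - 1) :=
    card_ne_index k
  have hN : 2 ≤ 2 ^ (Fintype.card S - 1) := by
    have h1 : 1 ≤ Fintype.card S - 1 := by omega
    calc 2 = 2 ^ 1 := rfl
    _ ≤ 2 ^ (Fintype.card S - 1) := Nat.pow_le_pow_right (by norm_num) h1
  obtain ⟨f₀, hf₀⟩ : ∃ f, ¬P f := by
    apply exists_not_of_card_lt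
    rw [hc, htot]
    omega
  have hf₁ : ¬P (flip f₀) := fun h => hf₀ (by
    have := claim2 _ h
    have e : flip (flip f₀) = f₀ := by
      funext j
      simp only [hflip]
      by_cases hji : (j : S) = i
      · rw [if_pos hji, if_pos hji, Bool.not_not]
      · rw [if_neg hji, if_neg hji]
    rwa [e] at this)
  have hle := card_subtype_le_of_two_not P (Ne.symm (claim3 f₀)) hf₀ hf₁
  rw [htot] at hle
  rw [hc] at hle
  omega

end Aux4
section Aux5
variable {A : Type u}

/-- The face of an `(n+2)`-cube in direction `0`, as an `(n+1)`-cube. -/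
def tailCube {n : ℕ} (b : Bool) (γ : Cube (Fin (n + 2)) A) : Cube (Fin (n + 1)) A :=
  fun f => γ (fun j => if h : j = 0 then b else f (j.pred h))

theorem tailCube_glue_zero {n : ℕ} (b : Bool) (a₁ a₂ : Cube {x : Fin (n + 2) // x ≠ 0} A) :
    tailCube b (glue 0 a₁ a₂) =
      (fun f => (bif b then a₂ else a₁) (fun j => f ((j : Fin (n + 2)).pred j.2))) := by
  funext f
  set p : Fin (n + 2) → Bool := fun j => if h : j = 0 then b else f (j.pred h) with hpdef
  have hp0 : p 0 = b := dif_pos rfl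
  show (if p 0 = true then a₂ (fun j => p j.val) else a₁ (fun j => p j.val)) = _
  rw [hp0]
  have hrest : (fun j : {x : Fin (n + 2) // x ≠ 0} => p j.val) =
      (fun j : {x : Fin (n + 2) // x ≠ 0} => f ((j : Fin (n + 2)).pred j.2)) := by
    funext j
    show (if h : (j : Fin (n + 2)) = 0 then b else f ((j : Fin (n + 2)).pred h)) = _
    rw [dif_neg j.2]
  cases b
  · rw [if_neg (by simp)]
    rw [hrest]
    rfl
  · rw [if_pos rfl]
    rw [hrest]
    rfl

theorem tailCube_face_zero {n : ℕ} (b u : Bool) (γ : Cube (Fin (n + 2)) A) :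
    (fun f => face 0 u γ (fun j => f ((j : Fin (n + 2)).pred j.2))) = tailCube u γ := by
  funext f
  simp only [face, tailCube]

theorem tailCube_glue_ne {n : ℕ} (b u w : Bool) {i : Fin (n + 2)} (hi : i ≠ 0)
    (γ₁ γ₂ : Cube (Fin (n + 2)) A) :
    tailCube b (glue i (face i u γ₁) (face i w γ₂)) =
      glue (i.pred hi) (face (i.pred hi) u (tailCube b γ₁))
        (face (i.pred hi) w (tailCube b γ₂)) := by
  funext f
  simp only [tailCube, glue, face]
  have hpi : (if h : i = 0 then b else f (i.pred h)) = f (i.pred hi) := dif_neg hi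
  simp only [hpi]
  by_cases hf : f (i.pred hi) = true
  · rw [if_pos hf, if_pos hf]
    congr 1; funext j
    by_cases hji : (j : Fin (n + 2)) = i
    · rw [dif_pos hji]
      have hj0 : (j : Fin (n + 2)) ≠ 0 := hji ▸ hi
      rw [dif_neg hj0, dif_pos (by rw [Fin.pred_inj]; exact hji)]
    · rw [dif_neg hji]
      by_cases hj0 : (j : Fin (n + 2)) = 0
      · rw [dif_pos hj0, dif_pos hj0]
      · rw [dif_neg hj0, dif_neg hj0,
          dif_neg (fun h => hji (by rw [← Fin.pred_inj (ha := hj0) (hb := hi)]; exact h))]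
  · rw [if_neg hf, if_neg hf]
    congr 1; funext j
    by_cases hji : (j : Fin (n + 2)) = i
    · rw [dif_pos hji]
      have hj0 : (j : Fin (n + 2)) ≠ 0 := hji ▸ hi
      rw [dif_neg hj0, dif_pos (by rw [Fin.pred_inj]; exact hji)]
    · rw [dif_neg hji]
      by_cases hj0 : (j : Fin (n + 2)) = 0
      · rw [dif_pos hj0, dif_pos hj0]
      · rw [dif_neg hj0, dif_neg hj0,
          dif_neg (fun h => hji (by rw [← Fin.pred_inj (ha := hj0) (hb := hi)]; exact h))]

theorem tailCube_face_ne {n : ℕ} (b c : Bool) {i : Fin (n + 2)} (hi : i ≠ 0)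
    (γ : Cube (Fin (n + 2)) A) (f : {x : Fin (n + 1) // x ≠ i.pred hi} → Bool) :
    face (i.pred hi) c (tailCube b γ) f =
      face i c γ (fun j => if h : (j : Fin (n + 2)) = 0 then b
        else f ⟨(j : Fin (n + 2)).pred h, fun hc => j.2 (by
          rw [← Fin.pred_inj (ha := h) (hb := hi)]; exact hc)⟩) := by
  simp only [face, tailCube]
  congr 1; funext j
  by_cases hji : j = i
  · rw [dif_pos hji]
    have hj0 : j ≠ 0 := hji ▸ hi
    rw [dif_neg hj0, dif_pos (by rw [Fin.pred_inj]; exact hji)]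
  · rw [dif_neg hji]
    by_cases hj0 : j = 0
    · rw [dif_pos hj0, dif_pos hj0]
    · rw [dif_neg hj0, dif_neg hj0,
        dif_neg (fun h => hji (by rw [← Fin.pred_inj (ha := hj0) (hb := hi)]; exact h))]

end Aux5
section Aux6
variable {A : Type u} (σ : Signature) [Alg σ A] {n : ℕ}

/-- Cubes both of whose `0`-faces lie in `R'`. -/
def Tstar (R' : Set (Cube (Fin (n + 1)) A)) : Set (Cube (Fin (n + 2)) A) :=
  {γ | ∀ b, tailCube b γ ∈ R'}

theorem tailCube_glue_faces_zero (b u w : Bool) (γ₁ γ₂ : Cube (Fin (n + 2)) A) :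
    tailCube b (glue 0 (face 0 u γ₁) (face 0 w γ₂)) =
      bif b then tailCube w γ₂ else tailCube u γ₁ := by
  rw [tailCube_glue_zero]
  cases b
  · simp only [Bool.cond_false]
    exact tailCube_face_zero false u γ₁
  · simp only [Bool.cond_true]
    exact tailCube_face_zero true w γ₂

theorem Tstar_glue_mem {R' : Set (Cube (Fin (n + 1)) A)} (hT : IsTolerance σ R')
    {γ₁ γ₂ : Cube (Fin (n + 2)) A} (h1 : γ₁ ∈ Tstar R') (h2 : γ₂ ∈ Tstar R')
    (i : Fin (n + 2)) (u w : Bool)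
    (hcase : (u = false ∧ w = true ∧ face i true γ₁ = face i false γ₂ ∧ STrans R') ∨
      (γ₁ = γ₂ ∧ (u = w ∨ (u = true ∧ w = false)))) :
    glue i (face i u γ₁) (face i w γ₂) ∈ Tstar R' := by
  intro b
  by_cases hi : i = 0
  · subst hi
    rw [tailCube_glue_faces_zero]
    cases b
    · exact h1 u
    · exact h2 w
  · rw [tailCube_glue_ne b u w hi]
    rcases hcase with ⟨hu, hw, hm, htr⟩ | ⟨hg, hc⟩
    · subst hu; subst hw
      refine trans_closed htr (h1 b) (h2 b) ?_
      funext f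
      rw [tailCube_face_ne, tailCube_face_ne, hm]
    · subst hg
      rcases hc with h | ⟨hu, hw⟩
      · subst h
        exact refl_closed hT.2.1 (h1 b) (i.pred hi) u
      · subst hu; subst hw
        exact symm_closed hT.2.2 (h1 b) (i.pred hi)

theorem Tstar_isTol {R' : Set (Cube (Fin (n + 1)) A)} (hT : IsTolerance σ R') :
    IsTolerance σ (Tstar (A := A) R') := by
  refine ⟨?_, ?_, ?_⟩
  · intro o γs hγs b
    exact hT.1 o (fun k => tailCube b (γs k)) (fun k => hγs k b)
  · rintro i a b ⟨γ, hγ, hp⟩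
    obtain ⟨ha, hb⟩ : a = face i false γ ∧ b = face i true γ :=
      ⟨congrArg Prod.fst hp, congrArg Prod.snd hp⟩
    subst ha; subst hb
    exact ⟨mem_facesRel.mpr (Tstar_glue_mem σ hT hγ hγ i false false
        (Or.inr ⟨rfl, Or.inl rfl⟩)),
      mem_facesRel.mpr (Tstar_glue_mem σ hT hγ hγ i true true (Or.inr ⟨rfl, Or.inl rfl⟩))⟩
  · rintro i a b ⟨γ, hγ, hp⟩
    obtain ⟨ha, hb⟩ : a = face i false γ ∧ b = face i true γ :=
      ⟨congrArg Prod.fst hp, congrArg Prod.snd hp⟩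
    subst ha; subst hb
    exact mem_facesRel.mpr (Tstar_glue_mem σ hT hγ hγ i true false
      (Or.inr ⟨rfl, Or.inr ⟨rfl, rfl⟩⟩))

theorem Tstar_isH {R' : Set (Cube (Fin (n + 1)) A)} (hH : IsHCongruence σ R') :
    IsHCongruence σ (Tstar (A := A) R') := by
  refine ⟨Tstar_isTol σ hH.1, ?_⟩
  rintro i a b c ⟨γ₁, h1, hp₁⟩ ⟨γ₂, h2, hp₂⟩
  obtain ⟨ha, hb⟩ : a = face i false γ₁ ∧ b = face i true γ₁ :=
    ⟨congrArg Prod.fst hp₁, congrArg Prod.snd hp₁⟩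
  obtain ⟨hb', hc⟩ : b = face i false γ₂ ∧ c = face i true γ₂ :=
    ⟨congrArg Prod.fst hp₂, congrArg Prod.snd hp₂⟩
  subst ha; subst hc; subst hb
  exact mem_facesRel.mpr (Tstar_glue_mem σ hH.1 h1 h2 i false true
    (Or.inl ⟨rfl, rfl, hb', hH.2⟩))

theorem tailCube_cubeAt_zero (b : Bool) (p : A × A) :
    tailCube (n := n) b (cubeAt 0 p) =
      cubeAt (0 : Fin (n + 1)) (bif b then p.2 else p.1, bif b then p.2 else p.1) := by
  funext f
  show (bif (if h : (0 : Fin (n + 2)) = 0 then b else f ((0 : Fin (n + 2)).pred h))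
      then p.2 else p.1) = _
  rw [dif_pos rfl]
  show _ = bif f 0 then _ else _
  cases f 0 <;> rfl

theorem tailCube_cubeAt_ne (b : Bool) {j : Fin (n + 2)} (hj : j ≠ 0) (p : A × A) :
    tailCube b (cubeAt j p) = cubeAt (j.pred hj) p := by
  funext f
  show (bif (if h : j = 0 then b else f (j.pred h)) then p.2 else p.1) = _
  rw [dif_neg hj]
  rfl

theorem gens_tail {θ : Fin (n + 2) → Set (A × A)} (hθ : ∀ i, IsCongruence σ (θ i))
    {γ : Cube (Fin (n + 2)) A} (hγ : γ ∈ ⋃ i, cubeSet i (θ i)) (b : Bool) :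
    tailCube b γ ∈ ⋃ i : Fin (n + 1), cubeSet i (θ i.succ) := by
  simp only [Set.mem_iUnion, cubeSet, Set.mem_image] at hγ ⊢
  obtain ⟨j, p, hp, rfl⟩ := hγ
  by_cases hj : j = 0
  · subst hj
    refine ⟨0, (bif b then p.2 else p.1, bif b then p.2 else p.1),
      ((hθ _).1 _), (tailCube_cubeAt_zero b p).symm⟩
  · refine ⟨j.pred hj, p, ?_, (tailCube_cubeAt_ne b hj p).symm⟩
    rw [Fin.succ_pred]
    exact hp

theorem MRel_tail {θ : Fin (n + 2) → Set (A × A)} (hθ : ∀ i, IsCongruence σ (θ i))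
    {γ : Cube (Fin (n + 2)) A} (hγ : γ ∈ MRel σ θ) (b : Bool) :
    tailCube b γ ∈ MRel σ (fun i : Fin (n + 1) => θ i.succ) := by
  have : MRel σ θ ⊆ Tstar (MRel σ (fun i : Fin (n + 1) => θ i.succ)) := by
    refine tolGen_min σ (Tstar_isTol σ (tolGen_isTol σ _)) ?_
    intro γ' hγ' b'
    exact subset_tolGen σ _ (gens_tail σ hθ hγ' b')
  exact this hγ b

theorem DeltaRel_tail {θ : Fin (n + 2) → Set (A × A)} (hθ : ∀ i, IsCongruence σ (θ i))
    {γ : Cube (Fin (n + 2)) A} (hγ : γ ∈ DeltaRel σ θ) (b : Bool) :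
    tailCube b γ ∈ DeltaRel σ (fun i : Fin (n + 1) => θ i.succ) := by
  have : DeltaRel σ θ ⊆ Tstar (DeltaRel σ (fun i : Fin (n + 1) => θ i.succ)) := by
    refine congGen_min σ (Tstar_isH σ (congGen_isH σ _)) ?_
    intro γ' hγ' b'
    exact subset_congGen σ _ (gens_tail σ hθ hγ' b')
  exact this hγ b

end Aux6
section Aux7
variable {A : Type u} (σ : Signature) [Alg σ A] {n : ℕ}

theorem unique_not_of_card {α : Type*} [Fintype α] (P : α → Prop)
    (hc : Nat.card {f // P f} = Fintype.card α - 1) (h2 : 2 ≤ Fintype.card α) :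
    ∃ f₀, ¬P f₀ ∧ ∀ f, f ≠ f₀ → P f := by
  obtain ⟨f₀, hf₀⟩ := exists_not_of_card_lt P (by rw [hc]; omega)
  refine ⟨f₀, hf₀, ?_⟩
  intro f hne
  by_contra hPf
  have := card_subtype_le_of_two_not P hne hPf hf₀
  omega

theorem card_ne_singleton {α : Type*} [Fintype α] [DecidableEq α] (a : α) :
    Nat.card {x : α // x ≠ a} = Fintype.card α - 1 := by
  have h1 : Nat.card {x : α // x ≠ a} = Fintype.card {x : α // ¬(x = a)} :=
    Nat.card_eq_fintype_card
  rw [h1, Fintype.card_subtype_compl, Fintype.card_subtype_eq]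

theorem lastIdx_ne_zero : lastIdx (n + 2) ≠ 0 := by
  intro h
  have := congrArg Fin.val h
  simp [lastIdx] at this

theorem pred_lastIdx : (lastIdx (n + 2)).pred lastIdx_ne_zero = lastIdx (n + 1) := by
  apply Fin.ext
  simp [lastIdx, Fin.pred]

theorem centrality_transfer {δ : Set (A × A)} (hδ : IsCongruence σ δ)
    {R₂ : Set (Cube (Fin (n + 2)) A)} {R₁ : Set (Cube (Fin (n + 1)) A)}
    (hface : ∀ γ ∈ R₂, ∀ b, tailCube b γ ∈ R₁)
    (hcent : Centrality δ (lastIdx (n + 1)) R₁) :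
    Centrality δ (lastIdx (n + 2)) R₂ := by
  classical
  set L₂ : Fin (n + 2) := lastIdx (n + 2) with hL₂
  have hL0 : L₂ ≠ 0 := lastIdx_ne_zero
  rw [← pred_lastIdx (n := n)] at hcent
  set i' : Fin (n + 1) := L₂.pred hL0 with hi'
  rintro ⟨γ, hγ, hc⟩
  set P : ({x : Fin (n + 2) // x ≠ L₂} → Bool) → Prop :=
    fun f => (face L₂ false γ f, face L₂ true γ f) ∈ δ with hP
  have htot : Fintype.card ({x : Fin (n + 2) // x ≠ L₂} → Bool) = 2 ^ (n + 1) := by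
    rw [card_ne_index L₂, Fintype.card_fin]
    rfl
  have h2 : (2 : ℕ) ≤ 2 ^ (n + 1) := by
    calc (2:ℕ) = 2 ^ 1 := rfl
    _ ≤ 2 ^ (n + 1) := Nat.pow_le_pow_right (by norm_num) (by omega)
  have hc' : Nat.card {f // P f} = Fintype.card ({x : Fin (n + 2) // x ≠ L₂} → Bool) - 1 := by
    rw [htot, hc, Fintype.card_fin]
    rfl
  obtain ⟨f₀, hf₀, huniq⟩ := unique_not_of_card P hc' (by rw [htot]; exact h2)
  have h0L : (0 : Fin (n + 2)) ≠ L₂ := fun h => hL0 h.symm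
  set b₀ : Bool := f₀ ⟨0, h0L⟩ with hb₀
  set γ' : Cube (Fin (n + 1)) A := tailCube b₀ γ with hγ'
  -- the embedding of (n+1)-line-indices into (n+2)-line-indices
  have hpf : ∀ (j : {x : Fin (n + 2) // x ≠ L₂}) (h : (j : Fin (n + 2)) ≠ 0),
      (j : Fin (n + 2)).pred h ≠ i' := by
    intro j h hc2
    exact j.2 (by rw [← Fin.pred_inj (ha := h) (hb := hL0)]; exact hc2)
  set G : ({x : Fin (n + 1) // x ≠ i'} → Bool) → ({x : Fin (n + 2) // x ≠ L₂} → Bool) :=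
    fun g j => if h : (j : Fin (n + 2)) = 0 then b₀
      else g ⟨(j : Fin (n + 2)).pred h, hpf j h⟩ with hG
  have claimA : ∀ (c : Bool) (g : {x : Fin (n + 1) // x ≠ i'} → Bool),
      face i' c γ' g = face L₂ c γ (G g) := by
    intro c g
    exact tailCube_face_ne b₀ c hL0 γ g
  set Q : ({x : Fin (n + 1) // x ≠ i'} → Bool) → Prop :=
    fun g => (face i' false γ' g, face i' true γ' g) ∈ δ with hQ
  have hQP : ∀ g, Q g ↔ P (G g) := by
    intro g
    rw [hQ, hP]
    simp only [claimA]
  -- G is injective and hits f₀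
  have hsucc : ∀ j' : {x : Fin (n + 1) // x ≠ i'}, (j' : Fin (n + 1)).succ ≠ L₂ := by
    intro j' h
    apply j'.2
    apply Fin.ext
    have hv := congrArg Fin.val h
    simp only [Fin.val_succ, lastIdx, hL₂] at hv
    simp only [hi', Fin.coe_pred, hL₂, lastIdx]
    omega
  have hGeval : ∀ (g : {x : Fin (n + 1) // x ≠ i'} → Bool) (j' : {x : Fin (n + 1) // x ≠ i'}),
      G g ⟨(j' : Fin (n + 1)).succ, hsucc j'⟩ = g j' := by
    intro g j'
    rw [hG]
    simp only
    rw [dif_neg (Fin.succ_ne_zero _)]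
    exact congrArg g (Subtype.ext (by simp))
  have hGinj : Function.Injective G := by
    intro g₁ g₂ h
    funext j'
    rw [← hGeval g₁ j', ← hGeval g₂ j', h]
  set g₀ : {x : Fin (n + 1) // x ≠ i'} → Bool :=
    fun j' => f₀ ⟨(j' : Fin (n + 1)).succ, hsucc j'⟩ with hg₀
  have hG0 : G g₀ = f₀ := by
    funext j
    rw [hG]
    simp only
    by_cases hj : (j : Fin (n + 2)) = 0
    · rw [dif_pos hj]
      have : j = ⟨0, h0L⟩ := Subtype.ext hj
      rw [this]
    · rw [dif_neg hj, hg₀]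
      simp only
      congr 1
      apply Subtype.ext
      simp [Fin.succ_pred]
  have hQiff : ∀ g, Q g ↔ g ≠ g₀ := by
    intro g
    rw [hQP]
    constructor
    · intro hPg hgg
      exact hf₀ (by rw [← hG0, ← hgg]; exact hPg)
    · intro hgg
      exact huniq _ (fun h => hgg (hGinj (by rw [h, hG0])))
  have hcard : Nat.card {g // Q g} = 2 ^ n - 1 := by
    rw [Nat.card_congr (Equiv.subtypeEquivRight hQiff), card_ne_singleton g₀,
      card_ne_index i', Fintype.card_fin]
    rfl
  refine hcent ⟨γ', hface γ hγ b₀, ?_⟩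
  have hfin : Nat.card {f : {x : Fin (n + 1) // x ≠ i'} → Bool //
      (face i' false γ' f, face i' true γ' f) ∈ δ} = 2 ^ n - 1 := hcard
  rw [hfin, Fintype.card_fin]
  rfl

end Aux7
section Aux8
variable {A : Type u} (σ : Signature) [Alg σ A]

theorem centrality_anti {S : Type v} [DecidableEq S] [Fintype S] {δ : Set (A × A)} {i : S}
    {R₁ R₂ : Set (Cube S A)} (h : R₁ ⊆ R₂) (hc : Centrality δ i R₂) : Centrality δ i R₁ :=
  fun ⟨γ, hγ, hcard⟩ => hc ⟨γ, h hγ, hcard⟩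

theorem theta_centrality {n : ℕ} {θ : Fin (n + 2) → Set (A × A)}
    (hθ : ∀ i, IsCongruence σ (θ i)) (i : Fin (n + 2)) :
    Centrality (θ i) (lastIdx (n + 2)) (DeltaRel σ θ) := by
  by_cases hi : i = lastIdx (n + 2)
  · subst hi
    exact centrality_of_eq (DeltaRel_subset_Lset σ hθ _)
  · exact centrality_of_ne σ (hθ i) hi (by simp) (DeltaRel_subset_Lset σ hθ i)

end Aux8
/-- basic properties of the hypercommutator (and of the term condition
commutator): bounded by the meet, monotone, dropping the first argument increases the
value, and `[⋯]_TC ≤ [⋯]_H`.  Here the arity is `n + 2 ≥ 2`. -/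
theorem stmt11 {A : Type u} (σ : Signature) [Alg σ A] (n : ℕ)
    (θ γ : Fin (n + 2) → Set (A × A))
    (hθ : ∀ i, IsCongruence σ (θ i)) (hγ : ∀ i, IsCongruence σ (γ i))
    (hle : ∀ i, θ i ⊆ γ i) :
    (hComm σ (n + 2) θ ⊆ ⋂ i, θ i) ∧
    (tcComm σ (n + 2) θ ⊆ ⋂ i, θ i) ∧
    (hComm σ (n + 2) θ ⊆ hComm σ (n + 2) γ) ∧
    (tcComm σ (n + 2) θ ⊆ tcComm σ (n + 2) γ) ∧
    (hComm σ (n + 2) θ ⊆ hComm σ (n + 1) (fun i : Fin (n + 1) => θ i.succ)) ∧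
    (tcComm σ (n + 2) θ ⊆ tcComm σ (n + 1) (fun i : Fin (n + 1) => θ i.succ)) ∧
    (tcComm σ (n + 2) θ ⊆ hComm σ (n + 2) θ) := by
  have hMD : MRel σ θ ⊆ DeltaRel σ θ := MRel_subset_DeltaRel σ θ
  have hDmono : DeltaRel σ θ ⊆ DeltaRel σ γ :=
    congGen_mono σ (Set.iUnion_mono fun i => Set.image_mono (hle i))
  have hMmono : MRel σ θ ⊆ MRel σ γ :=
    tolGen_mono σ (Set.iUnion_mono fun i => Set.image_mono (hle i))
  refine ⟨?_, ?_, ?_, ?_, ?_, ?_, ?_⟩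
  · -- hComm ⊆ ⋂ θ i
    intro x hx
    refine Set.mem_iInter.mpr fun i => ?_
    exact hx (θ i) ⟨(hθ i), theta_centrality σ hθ i⟩
  · -- tcComm ⊆ ⋂ θ i
    intro x hx
    refine Set.mem_iInter.mpr fun i => ?_
    exact hx (θ i) ⟨(hθ i), centrality_anti hMD (theta_centrality σ hθ i)⟩
  · -- hComm monotone
    intro x hx δ hδ
    exact hx δ ⟨hδ.1, centrality_anti hDmono hδ.2⟩
  · -- tcComm monotone
    intro x hx δ hδ
    exact hx δ ⟨hδ.1, centrality_anti hMmono hδ.2⟩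
  · -- hComm drop first
    intro x hx δ hδ
    exact hx δ ⟨hδ.1, centrality_transfer σ hδ.1 (fun _ hg b => DeltaRel_tail σ hθ hg b) hδ.2⟩
  · -- tcComm drop first
    intro x hx δ hδ
    exact hx δ ⟨hδ.1, centrality_transfer σ hδ.1 (fun _ hg b => MRel_tail σ hθ hg b) hδ.2⟩
  · -- tcComm ⊆ hComm
    intro x hx δ hδ
    exact hx δ ⟨hδ.1, centrality_anti hMD hδ.2⟩
end
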